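/- Let A be a k×k primitive integer matrix, let λ be its Perron–Frobenius eigenvalue (so λ is a real eigenvalue of A and every complex eigenvalue μ ≠ λ of A satisfies |μ| < λ), let n be the degree of the minimal polynomial of λ over ℚ, and let w ∈ ℝ^k be a left λ-eigenvector of A all of whose entries are strictly positive. Then the subgroup L = {x ∈ ℤ^k : w·x = 0} of ℤ^k is free abelian of rank k − n. -/

import Mathlib

open Matrix

lemma aux_vecMul_smulmat {k : ℕ} {F : Type*} [CommRing F] (μ : F) (x : Fin k → F) :
    x ᵥ* (μ • (1 : Matrix (Fin k) (Fin k) F)) = μ • x := by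
  ext j
  simp [Matrix.vecMul, dotProduct, Matrix.one_apply, mul_comm]

lemma aux_vecMul_pow {k : ℕ} {F : Type*} [CommRing F] (M : Matrix (Fin k) (Fin k) F) (μ : F)
    (x : Fin k → F) (h : x ᵥ* M = μ • x) : ∀ m : ℕ, x ᵥ* (M ^ m) = μ ^ m • x := by
  intro m
  induction m with
  | zero => simp [Matrix.vecMul_one]
  | succ m ih =>
    rw [pow_succ, ← Matrix.vecMul_vecMul, ih, Matrix.smul_vecMul, h, pow_succ, smul_smul]

lemma aux_det_zero {k : ℕ} {F : Type*} [Field F] (M : Matrix (Fin k) (Fin k) F) (μ : F)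
    (x : Fin k → F) (hx : x ≠ 0) (h : x ᵥ* M = μ • x) :
    (μ • (1 : Matrix (Fin k) (Fin k) F) - M).det = 0 := by
  rw [← Matrix.det_transpose, ← Matrix.exists_mulVec_eq_zero_iff]
  refine ⟨x, hx, ?_⟩
  rw [Matrix.mulVec_transpose, Matrix.vecMul_sub, h, aux_vecMul_smulmat, sub_self]

lemma aux_eval_charpoly {k : ℕ} {F : Type*} [CommRing F] (M : Matrix (Fin k) (Fin k) F) (x : F) :
    (M.charpoly).eval x = (x • (1 : Matrix (Fin k) (Fin k) F) - M).det := by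
  rw [Matrix.charpoly, ← Polynomial.coe_evalRingHom, RingHom.map_det]
  congr 1
  ext i j
  by_cases h : i = j <;> simp [charmatrix_apply, Matrix.one_apply, Matrix.diagonal_apply, h]

lemma aux_simple {k : ℕ} (hk : 0 < k) (B : Matrix (Fin k) (Fin k) ℝ) (hB : ∀ i j, 0 < B i j)
    (ρ : ℝ) (w : Fin k → ℝ) (hwpos : ∀ i, 0 < w i) (hw : w ᵥ* B = ρ • w)
    (u : Fin k → ℝ) (hu : u ᵥ* B = ρ • u) : ∃ c : ℝ, u = c • w := by
  haveI : Nonempty (Fin k) := ⟨⟨0, hk⟩⟩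
  obtain ⟨i0, -, hi0⟩ := Finset.exists_min_image (Finset.univ : Finset (Fin k))
    (fun i => u i / w i) ⟨Classical.arbitrary _, Finset.mem_univ _⟩
  set t : ℝ := u i0 / w i0 with ht
  set v : Fin k → ℝ := u - t • w with hvdef
  have hv : ∀ i, 0 ≤ v i := by
    intro i
    have h1 : t ≤ u i / w i := hi0 i (Finset.mem_univ i)
    have h2 : t * w i ≤ u i := by
      rw [← le_div_iff₀ (hwpos i)]
      exact h1
    simp only [hvdef, Pi.sub_apply, Pi.smul_apply, smul_eq_mul]
    linarith
  have hv0 : v i0 = 0 := by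
    simp only [hvdef, Pi.sub_apply, Pi.smul_apply, smul_eq_mul, ht]
    rw [div_mul_cancel₀ _ (hwpos i0).ne']
    ring
  have hveig : v ᵥ* B = ρ • v := by
    rw [hvdef, Matrix.sub_vecMul, Matrix.smul_vecMul, hw, hu, smul_sub, smul_comm]
  refine ⟨t, ?_⟩
  by_contra hne
  have hvne : v ≠ 0 := by
    intro h0
    apply hne
    have := sub_eq_zero.mp (hvdef ▸ h0)
    rw [this]
  obtain ⟨j, hj⟩ := Function.ne_iff.mp hvne
  have hjpos : 0 < v j := lt_of_le_of_ne (hv j) (Ne.symm hj)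
  have hcontra : 0 < (v ᵥ* B) i0 := by
    rw [Matrix.vecMul]
    refine Finset.sum_pos' (fun i _ => mul_nonneg (hv i) (hB i i0).le) ⟨j, Finset.mem_univ j, ?_⟩
    exact mul_pos hjpos (hB j i0)
  rw [hveig] at hcontra
  simp only [Pi.smul_apply, hv0, smul_eq_mul, mul_zero] at hcontra
  exact lt_irrefl 0 hcontra

lemma aux_span_top {F : Type*} [Field F] [Algebra ℚ F] (g : F)
    (hgen : Algebra.adjoin ℚ ({g} : Set F) = ⊤)
    (S : Submodule ℚ F) (hclosed : ∀ s ∈ S, g * s ∈ S)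
    (s0 : F) (hs0 : s0 ∈ S) (hs0ne : s0 ≠ 0) : S = ⊤ := by
  have claim1 : ∀ m : ℕ, ∀ s ∈ S, g ^ m * s ∈ S := by
    intro m
    induction m with
    | zero => intro s hs; simpa using hs
    | succ m ih =>
      intro s hs
      rw [pow_succ, mul_comm (g ^ m) g, mul_assoc]
      exact hclosed _ (ih s hs)
  have claim2 : ∀ a : F, ∀ s ∈ S, a * s ∈ S := by
    intro a s hs
    have ha : a ∈ Algebra.adjoin ℚ ({g} : Set F) := hgen ▸ Algebra.mem_top
    rw [Algebra.adjoin_singleton_eq_range_aeval] at ha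
    obtain ⟨p, hp⟩ := ha
    rw [show ((Polynomial.aeval g).toRingHom p : F) = Polynomial.aeval g p from rfl] at hp
    rw [← hp, Polynomial.aeval_eq_sum_range, Finset.sum_mul]
    refine Submodule.sum_mem S fun i _ => ?_
    rw [smul_mul_assoc]
    exact Submodule.smul_mem S _ (claim1 i s hs)
  rw [Submodule.eq_top_iff']
  intro a
  have := claim2 (a * s0⁻¹) s0 hs0
  rwa [mul_assoc, inv_mul_cancel₀ hs0ne, mul_one] at this

lemma aux_zsmul_mem {M : Type*} [AddCommGroup M] [Module ℚ M] (T : Submodule ℚ M) (z : ℤ)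
    {x : M} (hx : x ∈ T) : z • x ∈ T := by
  rw [← Int.cast_smul_eq_zsmul ℚ]
  exact T.smul_mem _ hx

set_option maxHeartbeats 1000000 in
set_option synthInstance.maxHeartbeats 200000 in
theorem stmt_14 {k : ℕ} (A : Matrix (Fin k) (Fin k) ℤ)
    (hprim : ∃ N : ℕ, 0 < N ∧ ∀ i j, 0 < (A ^ N) i j)
    (lam : ℝ)
    (heig : ∃ v : Fin k → ℝ, v ≠ 0 ∧ (A.map (Int.cast : ℤ → ℝ)) *ᵥ v = lam • v)
    (hmax : ∀ μ : ℂ, μ ≠ (lam : ℂ) →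
      (∃ u : Fin k → ℂ, u ≠ 0 ∧ (A.map (Int.cast : ℤ → ℂ)) *ᵥ u = μ • u) →
      ‖μ‖ < lam)
    (n : ℕ) (hndeg : n = (minpoly ℚ lam).natDegree)
    (w : Fin k → ℝ) (hwpos : ∀ i, 0 < w i)
    (hw : w ᵥ* (A.map (Int.cast : ℤ → ℝ)) = lam • w)
    (L : Submodule ℤ (Fin k → ℤ))
    (hL : ∀ x : Fin k → ℤ, x ∈ L ↔ (∑ i, w i * (x i : ℝ)) = 0) :
    Module.Free ℤ L ∧ Module.finrank ℤ L = k - n := by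
  classical
  refine ⟨inferInstance, ?_⟩
  obtain ⟨N, hN, hApos⟩ := hprim
  rcases Nat.eq_zero_or_pos k with hk0 | hk
  · subst hk0
    haveI : Subsingleton (Fin 0 → ℤ) := ⟨fun a b => funext fun i => absurd i.2 (by omega)⟩
    haveI : Subsingleton L := ⟨fun a b => Subtype.ext (Subsingleton.elim _ _)⟩
    rw [Module.finrank_zero_of_subsingleton]
    omega
  haveI : Nonempty (Fin k) := ⟨⟨0, hk⟩⟩
  set Aℝ : Matrix (Fin k) (Fin k) ℝ := A.map (Int.cast : ℤ → ℝ) with hAℝ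
  have hwne : w ≠ 0 := fun h => (hwpos ⟨0, hk⟩).ne' (congrFun h ⟨0, hk⟩)
  have hdetℝ : (lam • (1 : Matrix (Fin k) (Fin k) ℝ) - Aℝ).det = 0 :=
    aux_det_zero Aℝ lam w hwne hw
  -- lam is integral over ℚ
  have hint : IsIntegral ℚ lam := by
    refine IsAlgebraic.isIntegral ⟨(A.charpoly).map (Int.castRingHom ℚ), ?_, ?_⟩
    · exact ((A.charpoly_monic).map _).ne_zero
    · rw [Polynomial.aeval_def, Polynomial.eval₂_eq_eval_map, Polynomial.map_map]
      have hcomp : (algebraMap ℚ ℝ).comp (Int.castRingHom ℚ) = Int.castRingHom ℝ := by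
        ext m; simp
      rw [hcomp, ← Matrix.charpoly_map, aux_eval_charpoly]
      exact hdetℝ
  -- the field K = ℚ(lam)
  set K : IntermediateField ℚ ℝ := IntermediateField.adjoin ℚ {lam} with hK
  set g : K := IntermediateField.AdjoinSimple.gen ℚ lam with hgdef
  have hg : algebraMap K ℝ g = lam := IntermediateField.AdjoinSimple.algebraMap_gen ℚ lam
  have hfinK : Module.finrank ℚ K = n := by
    rw [hndeg]
    exact IntermediateField.adjoin.finrank hint
  have hgen : Algebra.adjoin ℚ ({g} : Set K) = ⊤ := by
    have h1 := (IntermediateField.adjoin.powerBasis hint).adjoin_gen_eq_top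
    rwa [IntermediateField.adjoin.powerBasis_gen] at h1
  -- a K-rational left eigenvector
  set AK : Matrix (Fin k) (Fin k) K := A.map (Int.cast : ℤ → K) with hAK
  have hentry : ∀ i j, algebraMap K ℝ (AK i j) = Aℝ i j := by
    intro i j
    rw [show AK i j = ((A i j : ℤ) : K) from rfl, map_intCast]
    rfl
  have hmapdet : ((g • (1 : Matrix (Fin k) (Fin k) K) - AK).map (algebraMap K ℝ))
      = lam • (1 : Matrix (Fin k) (Fin k) ℝ) - Aℝ := by
    ext i j
    rw [Matrix.map_apply, Matrix.sub_apply, map_sub, hentry, Matrix.sub_apply]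
    congr 1
    by_cases h : i = j <;>
      simp [Matrix.smul_apply, Matrix.one_apply, h, hg]
  have hdetK : (g • (1 : Matrix (Fin k) (Fin k) K) - AK).det = 0 := by
    apply (algebraMap K ℝ).injective
    rw [RingHom.map_det, RingHom.mapMatrix_apply, hmapdet, hdetℝ, map_zero]
  obtain ⟨u, hune, huK⟩ : ∃ u : Fin k → K, u ≠ 0 ∧ u ᵥ* AK = g • u := by
    have hdt : ((g • (1 : Matrix (Fin k) (Fin k) K) - AK)ᵀ).det = 0 := by
      rw [Matrix.det_transpose]; exact hdetK
    obtain ⟨u, hune, hu0⟩ := (Matrix.exists_mulVec_eq_zero_iff).mpr hdt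
    refine ⟨u, hune, ?_⟩
    rw [Matrix.mulVec_transpose, Matrix.vecMul_sub, aux_vecMul_smulmat, sub_eq_zero] at hu0
    exact hu0.symm
  set uℝ : Fin k → ℝ := fun i => algebraMap K ℝ (u i) with huℝdef
  have huℝeig : uℝ ᵥ* Aℝ = lam • uℝ := by
    funext j
    have h1 := congrArg (algebraMap K ℝ) (congrFun huK j)
    have h2 : algebraMap K ℝ ((u ᵥ* AK) j) = (uℝ ᵥ* Aℝ) j := by
      rw [show (u ᵥ* AK) j = ∑ i, u i * AK i j from rfl, map_sum,
        show (uℝ ᵥ* Aℝ) j = ∑ i, uℝ i * Aℝ i j from rfl]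
      refine Finset.sum_congr rfl fun i _ => ?_
      rw [_root_.map_mul, hentry]
    have h3 : algebraMap K ℝ ((g • u) j) = lam * uℝ j := by
      rw [show (g • u) j = g * u j from rfl, _root_.map_mul, hg]
    rw [h2, h3] at h1
    rw [h1]
    rfl
  have huℝne : uℝ ≠ 0 := by
    obtain ⟨i, hi⟩ := Function.ne_iff.mp hune
    refine Function.ne_iff.mpr ⟨i, fun h => hi ?_⟩
    exact (algebraMap K ℝ).injective (by simpa [huℝdef] using h)
  -- positivity of Aℝ ^ N and simplicity
  have hBcast : (A ^ N).map (Int.cast : ℤ → ℝ) = Aℝ ^ N := by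
    have := map_pow ((Int.castRingHom ℝ).mapMatrix) A N
    simpa [RingHom.mapMatrix_apply] using this
  have hBpos : ∀ i j, 0 < (Aℝ ^ N) i j := by
    intro i j
    rw [← hBcast]
    simpa [Matrix.map_apply] using (Int.cast_pos.mpr (hApos i j) : (0:ℝ) < ((A ^ N) i j : ℝ))
  obtain ⟨c, hc⟩ := aux_simple hk (Aℝ ^ N) hBpos (lam ^ N) w hwpos
    (aux_vecMul_pow Aℝ lam w hw N) uℝ (aux_vecMul_pow Aℝ lam uℝ huℝeig N)
  have hcne : c ≠ 0 := fun h => huℝne (by rw [hc, h, zero_smul])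
  -- the span of the entries of u is all of K
  set S : Submodule ℚ K := Submodule.span ℚ (Set.range u) with hSdef
  have hclosed : ∀ s ∈ S, g * s ∈ S := by
    intro s hs
    induction hs using Submodule.span_induction with
    | mem x hx =>
      obtain ⟨j, rfl⟩ := hx
      have h1 : g * u j = (u ᵥ* AK) j := by rw [huK]; rfl
      have h2 : (u ᵥ* AK) j = ∑ i, (A i j) • u i := by
        simp only [Matrix.vecMul, dotProduct, hAK, Matrix.map_apply, zsmul_eq_mul]
        exact Finset.sum_congr rfl fun i _ => mul_comm _ _
      rw [h1, h2]
      exact Submodule.sum_mem S fun i _ => aux_zsmul_mem S (A i j)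
        (Submodule.subset_span (Set.mem_range_self i))
    | zero => simpa using Submodule.zero_mem S
    | add a b _ _ ha hb => rw [mul_add]; exact Submodule.add_mem S ha hb
    | smul q a _ ha => rw [mul_smul_comm]; exact Submodule.smul_mem S q ha
  obtain ⟨i1, hi1⟩ := Function.ne_iff.mp hune
  have hStop : S = ⊤ := aux_span_top g hgen S hclosed (u i1)
    (Submodule.subset_span (Set.mem_range_self i1)) hi1
  -- transfer to ℝ : the ℚ-span of the entries of w has dimension n
  set φ : K →ₗ[ℚ] ℝ := c⁻¹ • ((Algebra.linearMap K ℝ).restrictScalars ℚ) with hφdef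
  have hφ : ∀ x : K, φ x = c⁻¹ * algebraMap K ℝ x := fun x => rfl
  have hφinj : Function.Injective φ := by
    intro x y hxy
    rw [hφ, hφ] at hxy
    exact (algebraMap K ℝ).injective (mul_left_cancel₀ (inv_ne_zero hcne) hxy)
  have hφu : ∀ i, φ (u i) = w i := by
    intro i
    rw [hφ]
    have h6 : algebraMap K ℝ (u i) = c * w i := congrFun hc i
    rw [h6, inv_mul_cancel_left₀ hcne]
  have hrange : LinearMap.range φ = Submodule.span ℚ (Set.range w) := by
    rw [LinearMap.range_eq_map, ← hStop, hSdef, Submodule.map_span, ← Set.range_comp,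
      show (φ ∘ u) = w from funext hφu]
  have hspanw : Module.finrank ℚ (Submodule.span ℚ (Set.range w)) = n := by
    rw [← hrange, ← hfinK]
    exact (LinearEquiv.ofInjective φ hφinj).finrank_eq.symm
  -- the linear functional ψ on ℚ^k
  set ψ : (Fin k → ℚ) →ₗ[ℚ] ℝ := Fintype.linearCombination ℚ w with hψdef
  -- the ℤ-lattice
  set r := Module.finrank ℤ L with hr
  set b := Module.finBasis ℤ L with hb
  set gg : (Fin k → ℤ) →ₗ[ℤ] (Fin k → ℚ) :=
    LinearMap.pi (fun j => (Int.castRingHom ℚ).toIntLinearMap.comp (LinearMap.proj j)) with hgg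
  have hggapp : ∀ (y : Fin k → ℤ) (j : Fin k), gg y j = (y j : ℚ) := fun y j => rfl
  have hgginj : Function.Injective gg := by
    intro x y h
    funext j
    exact Int.cast_injective (congrFun h j)
  set cv : Fin r → (Fin k → ℚ) := fun i => gg (L.subtype (b i)) with hcv
  have hindℤ : LinearIndependent ℤ cv := by
    have := b.linearIndependent.map' (gg.comp L.subtype)
      (LinearMap.ker_eq_bot.mpr (hgginj.comp L.injective_subtype))
    exact this
  have hindℚ : LinearIndependent ℚ cv := (LinearIndependent.iff_fractionRing ℤ ℚ).mp hindℤ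
  have hLmem : ∀ y : Fin k → ℤ, gg y ∈ LinearMap.ker ψ ↔ y ∈ L := by
    intro y
    have hsum : ∑ i, gg y i • w i = ∑ i, w i * (y i : ℝ) :=
      Finset.sum_congr rfl fun i _ => by
        rw [hggapp, Rat.smul_def]
        push_cast
        ring
    rw [LinearMap.mem_ker, hψdef, Fintype.linearCombination_apply, hsum]
    exact (hL y).symm
  have hcvker : ∀ i, cv i ∈ LinearMap.ker ψ := fun i => (hLmem _).mpr (b i).2
  have hspan2 : Submodule.span ℚ (Set.range cv) = LinearMap.ker ψ := by
    apply le_antisymm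
    · rw [Submodule.span_le]
      rintro _ ⟨i, rfl⟩
      exact hcvker i
    · intro x hx
      obtain ⟨d, hd⟩ := IsLocalization.exist_integer_multiples (nonZeroDivisors ℤ)
        Finset.univ x
      choose y hy using fun i => hd i (Finset.mem_univ i)
      have hdne : ((d : ℤ) : ℚ) ≠ 0 := Int.cast_ne_zero.mpr (nonZeroDivisors.coe_ne_zero d)
      have hgy : gg y = ((d : ℤ) : ℚ) • x := by
        funext j
        rw [hggapp]
        have := hy j
        simpa [Algebra.smul_def] using this
      have hyL : y ∈ L := by
        rw [← hLmem, hgy]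
        exact Submodule.smul_mem _ _ hx
      have hrepr := b.sum_repr ⟨y, hyL⟩
      have hgy2 : gg y ∈ Submodule.span ℚ (Set.range cv) := by
        have h4 : gg y = ∑ i, (b.repr ⟨y, hyL⟩ i) • cv i := by
          calc gg y = gg (L.subtype ⟨y, hyL⟩) := rfl
            _ = gg (L.subtype (∑ i, (b.repr ⟨y, hyL⟩ i) • b i)) := by rw [hrepr]
            _ = ∑ i, (b.repr ⟨y, hyL⟩ i) • cv i := by
                simp only [map_sum, map_zsmul, hcv]
        rw [h4]
        exact Submodule.sum_mem _ fun i _ => aux_zsmul_mem _ _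
          (Submodule.subset_span (Set.mem_range_self i))
      have hx2 : x = (((d : ℤ) : ℚ))⁻¹ • gg y := by
        rw [hgy, smul_smul, inv_mul_cancel₀ hdne, one_smul]
      rw [hx2]
      exact Submodule.smul_mem _ _ hgy2
  have hkerrank : Module.finrank ℚ (LinearMap.ker ψ) = r := by
    rw [← hspan2, finrank_span_eq_card hindℚ, Fintype.card_fin]
  have hrn := LinearMap.finrank_range_add_finrank_ker ψ
  rw [hkerrank, hψdef, Fintype.range_linearCombination, hspanw, Module.finrank_pi,
    Fintype.card_fin] at hrn
  omega
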